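/- For $0 < y < 1$ and $0 < z < 1$, the function $g(y,z) = Li_2(1-yz) + Li_2(1) + \log\frac{y(1-z)}{y-1}\log(1-yz) - Li_2\left(\frac{y}{y-1}\right) + Li_2\left(\frac{1-yz}{z(1-y)}\right) - Li_2\left(\frac{1}{z}\right) + \log(1-y)\log(yz)$ satisfies $g(y,z) = Li_{1,1}(y,z) - Li_2(1-y) + 3\,Li_2(1)$, provided consistent branches are chosen; in particular, the derivative identity $\frac{\partial}{\partial y}\left[Li_2(1-yz) - Li_2\left(\frac{y}{y-1}\right) + Li_2\left(\frac{1-yz}{z(1-y)}\right) + \log\left(\frac{y(1-z)}{y-1}\right)\log(1-yz) + \log(1-y)\log(yz)\right] = \frac{\partial}{\partial y}\left[Li_{1,1}(y,z) - Li_2(1-y)\right]$ holds wherever all terms are defined and real-analytic. -/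

import Mathlib

/-- The real dilogarithm `Li₂(x) = -∫_0^x log(1-s)/s ds` (note that `Real.log`
is the logarithm of the absolute value, so this is the real-analytic
continuation for `x > 1` as well). -/
noncomputable def Li2R (x : ℝ) : ℝ := -∫ s in (0:ℝ)..x, Real.log (1 - s) / s

/-- The double logarithm `Li_{1,1}(y,z) = ∑_{0<j<k} y^j z^k/(jk)`. -/
noncomputable def Li11 (y z : ℝ) : ℝ :=
  ∑' p : ℕ × ℕ, if 0 < p.1 ∧ p.1 < p.2 then y ^ p.1 * z ^ p.2 / ((p.1 : ℝ) * (p.2 : ℝ)) else 0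

open MeasureTheory intervalIntegral Set

lemma abs_log_le (x : ℝ) (hx : 0 < x) :
    |Real.log x| ≤ 2 * (x ^ (-(1:ℝ)/2) + x ^ ((1:ℝ)/2)) := by
  have h2 : Real.log x = 2 * Real.log (x ^ ((1:ℝ)/2)) := by
    rw [Real.log_rpow hx]; ring
  have hxp : (0:ℝ) < x ^ ((1:ℝ)/2) := Real.rpow_pos_of_pos hx _
  rcases le_total x 1 with h | h
  · have hlog : Real.log x ≤ 0 := Real.log_nonpos hx.le (by linarith)
    rw [abs_of_nonpos hlog]
    have : Real.log ((x ^ ((1:ℝ)/2))⁻¹) ≤ (x ^ ((1:ℝ)/2))⁻¹ - 1 :=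
      Real.log_le_sub_one_of_pos (by positivity)
    rw [Real.log_inv] at this
    have hinv : (x ^ ((1:ℝ)/2))⁻¹ = x ^ (-(1:ℝ)/2) := by
      rw [← Real.rpow_neg hx.le]; norm_num
    nlinarith [Real.rpow_nonneg hx.le ((1:ℝ)/2), Real.rpow_nonneg hx.le (-(1:ℝ)/2)]
  · have hlog : 0 ≤ Real.log x := Real.log_nonneg h
    rw [abs_of_nonneg hlog]
    have : Real.log (x ^ ((1:ℝ)/2)) ≤ x ^ ((1:ℝ)/2) - 1 :=
      Real.log_le_sub_one_of_pos hxp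
    nlinarith [Real.rpow_nonneg hx.le (-(1:ℝ)/2)]

lemma intervalIntegrable_log' (a b : ℝ) : IntervalIntegrable Real.log volume a b := by
  have key : ∀ c : ℝ, 0 ≤ c → IntervalIntegrable Real.log volume 0 c := by
    intro c hc
    have hig : IntervalIntegrable (fun x : ℝ => 2 * (x ^ (-(1:ℝ)/2) + x ^ ((1:ℝ)/2)))
        volume 0 c := by
      exact ((intervalIntegrable_rpow' (by norm_num)).add
        (intervalIntegrable_rpow' (by norm_num))).const_mul 2
    rw [intervalIntegrable_iff] at hig ⊢
    refine hig.mono' Real.measurable_log.aestronglyMeasurable ?_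
    filter_upwards [ae_restrict_mem measurableSet_uIoc] with x hx
    rw [Set.uIoc_of_le hc] at hx
    have hb := abs_log_le x hx.1
    exact hb
  have key2 : ∀ c : ℝ, IntervalIntegrable Real.log volume 0 c := by
    intro c
    rcases le_total 0 c with h | h
    · exact key c h
    · rw [IntervalIntegrable.iff_comp_neg]
      have := key (-c) (by linarith)
      simp only [Real.log_neg_eq_log]
      simpa using this
  exact (key2 a).symm.trans (key2 b)

lemma intervalIntegrable_log_one_sub (a b : ℝ) :
    IntervalIntegrable (fun s : ℝ => Real.log (1 - s)) volume a b := by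
  have := (intervalIntegrable_log' (1 - a) (1 - b)).comp_sub_left 1
  simpa using this

lemma li2_integrand_integrable (x : ℝ) :
    IntervalIntegrable (fun s : ℝ => Real.log (1 - s) / s) volume 0 x := by
  -- first: on any interval with upper bound < 1, use a bound
  have bdd : ∀ c : ℝ, c < 1 →
      IntervalIntegrable (fun s : ℝ => Real.log (1 - s) / s) volume 0 c := by
    intro c hc
    rw [intervalIntegrable_iff]
    have hmeas : AEStronglyMeasurable (fun s : ℝ => Real.log (1 - s) / s)
        volume :=
      ((Real.measurable_log.comp (measurable_const.sub measurable_id)).div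
        measurable_id).aestronglyMeasurable
    set b : ℝ := max c 0 with hb
    have hb1 : b < 1 := max_lt hc one_pos
    have hb0 : 0 ≤ b := le_max_right _ _
    refine Measure.integrableOn_of_bounded (M := (1 - b)⁻¹) measure_Ioc_lt_top.ne hmeas ?_
    filter_upwards [ae_restrict_mem measurableSet_uIoc] with s hs
    have hs1 : s ≤ b := by
      rcases le_or_gt 0 c with h | h
      · rw [Set.uIoc_of_le h] at hs; exact hs.2.trans (le_max_left _ _)
      · rw [Set.uIoc_of_ge h.le] at hs; exact hs.2.trans (le_max_right _ _)
    show |Real.log (1 - s) / s| ≤ (1 - b)⁻¹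
    rcases lt_trichotomy s 0 with h | h | h
    · -- s < 0: |log(1-s)| = log(1-s) ≤ -s
      have h1 : Real.log (1 - s) ≤ -s := by
        have := Real.log_le_sub_one_of_pos (x := 1 - s) (by linarith)
        linarith
      have h2 : 0 ≤ Real.log (1 - s) := Real.log_nonneg (by linarith)
      rw [abs_div, abs_of_nonneg h2, abs_of_neg h]
      rw [div_le_iff₀ (by linarith)]
      have : (1:ℝ) ≤ (1 - b)⁻¹ := by
        rw [le_inv_comm₀] <;> [skip; norm_num; linarith]
        · linarith
      nlinarith
    · rw [h]
      simp only [sub_zero, Real.log_one, div_zero, abs_zero]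
      rw [inv_nonneg]
      linarith
    · -- 0 < s ≤ b < 1 : -log(1-s) ≤ s/(1-b)
      have hs1' : s < 1 := lt_of_le_of_lt hs1 hb1
      have h1 : Real.log ((1 - s)⁻¹) ≤ (1 - s)⁻¹ - 1 :=
        Real.log_le_sub_one_of_pos (by rw [inv_pos]; linarith)
      rw [Real.log_inv] at h1
      have h2 : Real.log (1 - s) ≤ 0 := Real.log_nonpos (by linarith) (by linarith)
      rw [abs_div, abs_of_nonpos h2, abs_of_pos h, div_le_iff₀ h]
      have e1 : (1 - s)⁻¹ - 1 = s / (1 - s) := by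
        have hne : (1:ℝ) - s ≠ 0 := by linarith
        field_simp
        ring
      have e2 : s / (1 - s) ≤ s / (1 - b) := by
        apply div_le_div_of_nonneg_left h.le (by linarith) (by linarith)
      calc -Real.log (1 - s) ≤ s / (1 - s) := by rw [← e1]; linarith
        _ ≤ s / (1 - b) := e2
        _ = (1 - b)⁻¹ * s := by rw [div_eq_inv_mul]
  rcases lt_or_ge x 1 with hx | hx
  · exact bdd x hx
  · refine (bdd (1/2) (by norm_num)).trans ?_
    have h1 : IntervalIntegrable (fun s : ℝ => Real.log (1 - s) * s⁻¹) volume (1/2) x := by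
      refine (intervalIntegrable_log_one_sub _ _).mul_continuousOn ?_
      refine ContinuousOn.inv₀ continuousOn_id ?_
      intro t ht h0
      rw [h0, Set.uIcc_of_le (by linarith : (1:ℝ)/2 ≤ x)] at ht
      norm_num at ht
    simpa [div_eq_mul_inv] using h1

lemma hasDerivAt_Li2R {x : ℝ} (hx0 : x ≠ 0) (hx1 : x ≠ 1) :
    HasDerivAt Li2R (-(Real.log (1 - x) / x)) x := by
  have hint := li2_integrand_integrable x
  have hcont : ContinuousAt (fun s : ℝ => Real.log (1 - s) / s) x := by
    refine ContinuousAt.div ?_ continuousAt_id hx0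
    exact (Real.continuousAt_log (by intro h; apply hx1; linarith [sub_eq_zero.mp h])).comp
      (continuous_const.sub continuous_id).continuousAt
  have hmeas : StronglyMeasurableAtFilter (fun s : ℝ => Real.log (1 - s) / s)
      (nhds x) volume :=
    ((Real.measurable_log.comp (measurable_const.sub measurable_id)).div
      measurable_id).stronglyMeasurable.stronglyMeasurableAtFilter
  have := (intervalIntegral.integral_hasDerivAt_right hint hmeas hcont).neg
  exact this

lemma summable_pow_div {z : ℝ} (hz : |z| < 1) : Summable (fun k : ℕ => z ^ k / (k : ℝ)) := by
  have h := (Real.hasSum_pow_div_log_of_abs_lt_one hz).summable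
  rw [← summable_nat_add_iff 1]
  refine h.congr fun n => ?_
  push_cast
  ring

lemma tsum_pow_div {z : ℝ} (hz : |z| < 1) :
    ∑' k : ℕ, z ^ k / (k : ℝ) = -Real.log (1 - z) := by
  rw [Summable.tsum_eq_zero_add (summable_pow_div hz)]
  have h := (Real.hasSum_pow_div_log_of_abs_lt_one hz).tsum_eq
  simp only [Nat.cast_zero, div_zero, pow_zero, zero_add]
  rw [← h]
  refine tsum_congr fun n => ?_
  push_cast
  ring

lemma hasDerivAt_Li11 {y z : ℝ} (hy0 : 0 < y) (hy1 : y < 1) (hz0 : 0 < z) (hz1 : z < 1) :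
    HasDerivAt (fun t => Li11 t z)
      ((Real.log (1 - y * z) - y * Real.log (1 - z)) / (y * (1 - y))) y := by
  have hzabs : |z| < 1 := by rw [abs_of_pos hz0]; exact hz1
  set L : ℝ := -Real.log (1 - z) with hLdef
  have hL0 : 0 ≤ L := by
    rw [hLdef, neg_nonneg]; exact Real.log_nonpos (by linarith) (by linarith)
  have hzsum : Summable (fun k : ℕ => z ^ k / (k : ℝ)) := summable_pow_div hzabs
  set A : ℕ → ℝ := fun j => ∑' k : ℕ, if j < k then z ^ k / (k : ℝ) else 0 with hAdef
  have hterm_nn : ∀ k : ℕ, 0 ≤ z ^ k / (k : ℝ) := fun k => by positivity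
  have hAsum : ∀ j, Summable (fun k : ℕ => if j < k then z ^ k / (k : ℝ) else 0) := by
    intro j
    refine Summable.of_nonneg_of_le (fun k => ?_) (fun k => ?_) hzsum
    · split <;> [exact hterm_nn k; exact le_rfl]
    · split <;> [exact le_rfl; exact hterm_nn k]
  have hA_nn : ∀ j, 0 ≤ A j := fun j =>
    tsum_nonneg fun k => by split <;> [exact hterm_nn k; exact le_rfl]
  have hA_le : ∀ j, A j ≤ L := by
    intro j
    rw [hLdef, ← tsum_pow_div hzabs]
    refine Summable.tsum_le_tsum (fun k => ?_) (hAsum j) hzsum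
    split <;> [exact le_rfl; exact hterm_nn k]
  -- the open interval on which everything is controlled
  set r : ℝ := (1 + y) / 2 with hrdef
  have hyr : y < r := by rw [hrdef]; linarith
  have hr0 : 0 < r := by rw [hrdef]; linarith
  have hr1 : r < 1 := by rw [hrdef]; linarith
  have hymem : y ∈ Set.Ioo (-r) r := ⟨by linarith, hyr⟩
  set g : ℕ → ℝ → ℝ := fun j t => if 0 < j then A j / j * t ^ j else 0 with hgdef
  set g' : ℕ → ℝ → ℝ := fun j t => if 0 < j then A j * t ^ (j - 1) else 0 with hg'def
  set u : ℕ → ℝ := fun j => L / r * r ^ j with hudef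
  have hu : Summable u := (summable_geometric_of_lt_one hr0.le hr1).mul_left _
  have hg : ∀ j t, t ∈ Set.Ioo (-r) r → HasDerivAt (g j) (g' j t) t := by
    intro j t _
    rcases Nat.eq_zero_or_pos j with hj | hj
    · subst hj
      simp only [hgdef, hg'def, if_neg (lt_irrefl 0)]
      exact hasDerivAt_const t 0
    · have hjne : (j : ℝ) ≠ 0 := Nat.cast_ne_zero.mpr hj.ne'
      simp only [hgdef, hg'def, if_pos hj]
      have h1 := (hasDerivAt_pow j t).const_mul (A j / (j : ℝ))
      exact h1.congr_deriv (by rw [← mul_assoc, div_mul_cancel₀ _ hjne])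
  have habs : ∀ t : ℝ, t ∈ Set.Ioo (-r) r → |t| ≤ r := by
    intro t ht
    rw [abs_le]; exact ⟨ht.1.le, ht.2.le⟩
  have hg' : ∀ j t, t ∈ Set.Ioo (-r) r → ‖g' j t‖ ≤ u j := by
    intro j t ht
    rcases Nat.eq_zero_or_pos j with hj | hj
    · subst hj
      simp only [hg'def, if_neg (lt_irrefl 0), norm_zero, hudef]
      positivity
    · simp only [hg'def, if_pos hj, hudef]
      have hj1 : j - 1 + 1 = j := Nat.succ_pred_eq_of_pos hj
      have : L / r * r ^ j = L * r ^ (j - 1) := by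
        rw [← hj1, pow_succ]
        field_simp
        simp
      rw [this, Real.norm_eq_abs, abs_mul, abs_of_nonneg (hA_nn j), abs_pow]
      exact mul_le_mul (hA_le j) (pow_le_pow_left₀ (abs_nonneg t) (habs t ht) _)
        (by positivity) hL0
  have hg0 : Summable fun j => g j y := by
    refine Summable.of_nonneg_of_le (fun j => ?_) (fun j => ?_)
      ((summable_geometric_of_lt_one hy0.le hy1).mul_left L)
    · simp only [hgdef]
      split
      · exact mul_nonneg (div_nonneg (hA_nn _) (Nat.cast_nonneg _)) (pow_nonneg hy0.le _)
      · exact le_rfl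
    · simp only [hgdef]
      split
      · rename_i hj
        have h1 : A j / j ≤ A j := by
          apply div_le_self (hA_nn j)
          exact_mod_cast hj
        have := mul_le_mul_of_nonneg_right (h1.trans (hA_le j)) (pow_nonneg hy0.le j)
        linarith
      · positivity
  have key := hasDerivAt_tsum_of_isPreconnected hu isOpen_Ioo isPreconnected_Ioo
    hg hg' hymem hg0 hymem
  -- identify the sum with Li11 on the interval
  have heq : ∀ t ∈ Set.Ioo (-r) r, Li11 t z = ∑' j, g j t := by
    intro t ht
    have htr : |t| ≤ r := habs t ht
    have hFs : Summable (fun p : ℕ × ℕ =>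
        if 0 < p.1 ∧ p.1 < p.2 then t ^ p.1 * z ^ p.2 / ((p.1 : ℝ) * (p.2 : ℝ)) else 0) := by
      refine Summable.of_norm_bounded
        ((summable_geometric_of_lt_one hr0.le hr1).mul_of_nonneg
          (summable_geometric_of_lt_one hz0.le hz1)
          (fun k => by positivity) (fun k => by positivity)) ?_
      rintro ⟨j, k⟩
      simp only
      split
      · rename_i hjk
        obtain ⟨hj, hk⟩ := hjk
        have hk0 : 0 < k := hj.trans hk
        have hjk1 : (1 : ℝ) ≤ (j : ℝ) * k := by
          have h1 : (1 : ℕ) ≤ j * k := Nat.one_le_iff_ne_zero.mpr (Nat.mul_ne_zero hj.ne' hk0.ne')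
          exact_mod_cast h1
        have habsjk : |(j : ℝ) * k| = (j : ℝ) * k :=
          abs_of_pos (by exact_mod_cast Nat.mul_pos hj hk0)
        rw [Real.norm_eq_abs, abs_div, abs_mul, abs_pow, abs_pow, abs_of_pos hz0, habsjk]
        have h1 : |t| ^ j * z ^ k / ((j : ℝ) * k) ≤ |t| ^ j * z ^ k := by
          rw [div_le_iff₀ (by positivity)]
          nlinarith [hjk1, mul_nonneg (pow_nonneg (abs_nonneg t) j) (pow_nonneg hz0.le k)]
        refine h1.trans ?_
        exact mul_le_mul_of_nonneg_right (pow_le_pow_left₀ (abs_nonneg t) htr j) (by positivity)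
      · simp only [norm_zero]
        positivity
    rw [Li11, Summable.tsum_prod' hFs (fun j => hFs.prod_factor j)]
    refine tsum_congr fun j => ?_
    rcases Nat.eq_zero_or_pos j with hj | hj
    · subst hj
      simp [hgdef]
    · have hjne : (j : ℝ) ≠ 0 := Nat.cast_ne_zero.mpr hj.ne'
      have hpt : ∀ k : ℕ, (if 0 < j ∧ j < k then t ^ j * z ^ k / ((j : ℝ) * k) else 0)
          = t ^ j / (j : ℝ) * (if j < k then z ^ k / (k : ℝ) else 0) := by
        intro k
        by_cases hk : j < k
        · rw [if_pos ⟨hj, hk⟩, if_pos hk]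
          have hkne : (k : ℝ) ≠ 0 := Nat.cast_ne_zero.mpr ((Nat.zero_le j).trans_lt hk).ne'
          field_simp
          try ring
        · rw [if_neg (fun h => hk h.2), if_neg hk, mul_zero]
      rw [tsum_congr hpt, tsum_mul_left]
      simp only [hgdef, if_pos hj, ← hAdef]
      ring
  have key' : HasDerivAt (fun t => Li11 t z) (∑' j, g' j y) y := by
    refine HasDerivAt.congr_of_eventuallyEq key ?_
    filter_upwards [isOpen_Ioo.mem_nhds hymem] with t ht
    exact heq t ht
  -- now compute the sum of derivatives
  have hS_sum : Summable fun j => g' j y :=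
    Summable.of_nonneg_of_le
      (fun j => by
        simp only [hg'def]
        split
        · exact mul_nonneg (hA_nn _) (pow_nonneg hy0.le _)
        · exact le_rfl)
      (fun j => (le_abs_self _).trans (hg' j y hymem)) hu
  have hyz_abs : |y * z| < 1 := by
    rw [abs_of_pos (by positivity)]
    nlinarith
  have hyzsum : Summable (fun k : ℕ => (y * z) ^ k / (k : ℝ)) := summable_pow_div hyz_abs
  -- T := ∑' j, (if 0 < j then A j * y ^ j else 0)
  have hT_sum : Summable fun j : ℕ => (if 0 < j then A j * y ^ j else 0) := by
    refine Summable.of_nonneg_of_le (fun j => ?_) (fun j => ?_)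
      ((summable_geometric_of_lt_one hy0.le hy1).mul_left L)
    · split
      · rename_i hj; exact mul_nonneg (hA_nn j) (by positivity)
      · exact le_rfl
    · split
      · exact mul_le_mul_of_nonneg_right (hA_le j) (by positivity)
      · positivity
  have hyS : y * (∑' j, g' j y) = ∑' j : ℕ, (if 0 < j then A j * y ^ j else 0) := by
    rw [← tsum_mul_left]
    refine tsum_congr fun j => ?_
    rcases Nat.eq_zero_or_pos j with hj | hj
    · subst hj; simp [hg'def]
    · have hj1 : j - 1 + 1 = j := Nat.succ_pred_eq_of_pos hj
      simp only [hg'def, if_pos hj]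
      rw [mul_comm y (A j * y ^ (j - 1)), mul_assoc, ← pow_succ, hj1]
  -- H is the double family without the 1/j factor
  set H : ℕ × ℕ → ℝ := fun p =>
    if 0 < p.1 ∧ p.1 < p.2 then y ^ p.1 * (z ^ p.2 / (p.2 : ℝ)) else 0 with hHdef
  have hHs : Summable H := by
    refine Summable.of_norm_bounded
      ((summable_geometric_of_lt_one hy0.le hy1).mul_of_nonneg
        (summable_geometric_of_lt_one hz0.le hz1)
        (fun k => by positivity) (fun k => by positivity)) ?_
    rintro ⟨j, k⟩
    simp only [hHdef]
    split
    · rename_i hjk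
      have hk0 : 0 < k := hjk.1.trans hjk.2
      have h1 : z ^ k / (k : ℝ) ≤ z ^ k := by
        apply div_le_self (by positivity)
        exact_mod_cast hk0
      rw [Real.norm_eq_abs, abs_of_nonneg (by positivity)]
      exact mul_le_mul_of_nonneg_left h1 (by positivity)
    · simp only [norm_zero]
      positivity
  have step1 : ∀ j : ℕ, (if 0 < j then A j * y ^ j else 0) = ∑' k, H (j, k) := by
    intro j
    rcases Nat.eq_zero_or_pos j with hj | hj
    · subst hj
      simp [hHdef]
    · have hpt : ∀ k : ℕ, H (j, k) = y ^ j * (if j < k then z ^ k / (k : ℝ) else 0) := by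
        intro k
        simp only [hHdef]
        by_cases hk : j < k
        · rw [if_pos ⟨hj, hk⟩, if_pos hk]
        · rw [if_neg (fun h => hk h.2), if_neg hk, mul_zero]
      rw [tsum_congr hpt, tsum_mul_left, if_pos hj]
      exact mul_comm (A j) (y ^ j)
  have step2 : ∑' j, ∑' k, H (j, k) = ∑' k, ∑' j, H (j, k) := by
    have h' : Summable (Function.uncurry fun j k => H (j, k)) := by
      refine hHs.congr fun p => ?_
      rfl
    exact (Summable.tsum_comm' (f := fun j k => H (j, k)) h'
      (fun j => hHs.prod_factor j) (fun k => hHs.prod_symm.prod_factor k)).symm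
  have step3 : ∀ k : ℕ, (∑' j, H (j, k))
      = 1 / (y - 1) * ((y * z) ^ k / (k : ℝ)) - y / (y - 1) * (z ^ k / (k : ℝ)) := by
    intro k
    have hsupp : ∀ j ∉ Finset.range k, H (j, k) = 0 := by
      intro j hj
      rw [Finset.mem_range] at hj
      simp only [hHdef]
      rw [if_neg (fun h => hj h.2)]
    rw [tsum_eq_sum hsupp]
    have hpt : ∀ j ∈ Finset.range k, H (j, k)
        = (if 0 < j then y ^ j else 0) * (z ^ k / (k : ℝ)) := by
      intro j hj
      rw [Finset.mem_range] at hj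
      simp only [hHdef]
      by_cases h0 : 0 < j
      · rw [if_pos ⟨h0, hj⟩, if_pos h0]
      · rw [if_neg (fun h => h0 h.1), if_neg h0, zero_mul]
    rw [Finset.sum_congr rfl hpt, ← Finset.sum_mul]
    have hterm : ∀ j : ℕ, (if 0 < j then y ^ j else 0)
        = y ^ j - (if j = 0 then 1 else 0) := by
      intro j
      rcases Nat.eq_zero_or_pos j with h | h
      · subst h; simp
      · rw [if_pos h, if_neg h.ne', sub_zero]
    rw [Finset.sum_congr rfl (fun j _ => hterm j), Finset.sum_sub_distrib,
      geom_sum_eq hy1.ne k, Finset.sum_ite_eq' (Finset.range k) 0 (fun _ => (1:ℝ))]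
    rcases Nat.eq_zero_or_pos k with hk | hk
    · subst hk
      simp
    · have hkmem : (0 : ℕ) ∈ Finset.range k := Finset.mem_range.mpr hk
      rw [if_pos hkmem]
      have hkne : (k : ℝ) ≠ 0 := Nat.cast_ne_zero.mpr hk.ne'
      have hy1ne : y - 1 ≠ 0 := by intro h; apply hy1.ne; linarith
      rw [mul_pow]
      field_simp
      ring
  have hTv : y * (∑' j, g' j y)
      = 1 / (y - 1) * (-Real.log (1 - y * z)) - y / (y - 1) * (-Real.log (1 - z)) := by
    rw [hyS, tsum_congr step1, step2, tsum_congr step3,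
      Summable.tsum_sub ((summable_pow_div hyz_abs).mul_left _) (hzsum.mul_left _),
      tsum_mul_left, tsum_mul_left, tsum_pow_div hyz_abs, tsum_pow_div hzabs]
  have hSval : (∑' j, g' j y)
      = (Real.log (1 - y * z) - y * Real.log (1 - z)) / (y * (1 - y)) := by
    have hy1ne : y - 1 ≠ 0 := by intro h; apply hy1.ne; linarith
    have hyne : y ≠ 0 := hy0.ne'
    rw [eq_div_iff (mul_ne_zero hyne (by intro h; apply hy1.ne; linarith))]
    have h2 : y * (∑' j, g' j y) * (y - 1)
        = -Real.log (1 - y * z) + y * Real.log (1 - z) := by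
      rw [mul_comm (y * _) (y - 1), hTv]
      field_simp
      ring
    nlinarith [h2]
  rwa [hSval] at key'

/-- for `0<y<1`, `0<z<1`, the `y`-derivatives of
`Li₂(1-yz) - Li₂(y/(y-1)) + Li₂((1-yz)/(z(1-y))) + log(y(1-z)/(y-1)) log(1-yz)
 + log(1-y) log(yz)` and of `Li_{1,1}(y,z) - Li₂(1-y)` agree
(`Real.log` of a negative argument is the log of its absolute value). -/
theorem deriv_g_eq_deriv_Li11 (y z : ℝ) (hy0 : 0 < y) (hy1 : y < 1)
    (hz0 : 0 < z) (hz1 : z < 1) :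
    deriv (fun t => Li2R (1 - t * z) - Li2R (t / (t - 1)) + Li2R ((1 - t * z) / (z * (1 - t)))
        + Real.log (t * (1 - z) / (t - 1)) * Real.log (1 - t * z)
        + Real.log (1 - t) * Real.log (t * z)) y
      = deriv (fun t => Li11 t z - Li2R (1 - t)) y := by
  have hyne : y ≠ 0 := hy0.ne'
  have hzne : z ≠ 0 := hz0.ne'
  have h1y : (0:ℝ) < 1 - y := by linarith
  have h1z : (0:ℝ) < 1 - z := by linarith
  have h1yz : (0:ℝ) < 1 - y * z := by nlinarith
  have hy1ne : y - 1 ≠ 0 := by intro h; nlinarith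
  -- inner functions
  have d1 : HasDerivAt (fun t : ℝ => 1 - t * z) (-z) y := by
    simpa using ((hasDerivAt_id y).mul_const z).const_sub 1
  have d2 : HasDerivAt (fun t : ℝ => t / (t - 1))
      ((1 * (y - 1) - y * 1) / (y - 1) ^ 2) y :=
    (hasDerivAt_id y).div ((hasDerivAt_id y).sub_const 1) hy1ne
  have d3 : HasDerivAt (fun t : ℝ => (1 - t * z) / (z * (1 - t)))
      ((-z * (z * (1 - y)) - (1 - y * z) * (z * -1)) / (z * (1 - y)) ^ 2) y := by
    refine HasDerivAt.div d1 ?_ (by positivity)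
    simpa using ((hasDerivAt_id y).const_sub 1).const_mul z
  have d4 : HasDerivAt (fun t : ℝ => t * (1 - z) / (t - 1))
      ((1 * (1 - z) * (y - 1) - y * (1 - z) * 1) / (y - 1) ^ 2) y :=
    ((hasDerivAt_id y).mul_const (1 - z)).div ((hasDerivAt_id y).sub_const 1) hy1ne
  have d5 : HasDerivAt (fun t : ℝ => 1 - t) (-1) y := by
    simpa using (hasDerivAt_id y).const_sub 1
  have d6 : HasDerivAt (fun t : ℝ => t * z) (1 * z) y := (hasDerivAt_id y).mul_const z
  -- Li2R pieces
  have hA : HasDerivAt (fun t => Li2R (1 - t * z))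
      (-(Real.log (1 - (1 - y * z)) / (1 - y * z)) * -z) y :=
    (hasDerivAt_Li2R h1yz.ne' (by intro h; nlinarith [mul_pos hy0 hz0])).comp (h := fun t : ℝ => 1 - t * z) y d1
  have hB : HasDerivAt (fun t => Li2R (t / (t - 1)))
      (-(Real.log (1 - y / (y - 1)) / (y / (y - 1)))
        * ((1 * (y - 1) - y * 1) / (y - 1) ^ 2)) y := by
    refine (hasDerivAt_Li2R (div_ne_zero hyne hy1ne) ?_).comp (h := fun t : ℝ => t / (t - 1)) y d2
    intro h
    rw [div_eq_one_iff_eq hy1ne] at h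
    linarith
  have hC : HasDerivAt (fun t => Li2R ((1 - t * z) / (z * (1 - t))))
      (-(Real.log (1 - (1 - y * z) / (z * (1 - y))) / ((1 - y * z) / (z * (1 - y))))
        * ((-z * (z * (1 - y)) - (1 - y * z) * (z * -1)) / (z * (1 - y)) ^ 2)) y := by
    refine (hasDerivAt_Li2R (x := (1 - y * z) / (z * (1 - y))) (div_ne_zero h1yz.ne' (by positivity)) ?_).comp (h := fun t : ℝ => (1 - t * z) / (z * (1 - t))) y d3
    intro h
    rw [div_eq_one_iff_eq (by positivity : z * (1 - y) ≠ 0)] at h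
    nlinarith
  have hD : HasDerivAt (fun t => Li2R (1 - t))
      (-(Real.log (1 - (1 - y)) / (1 - y)) * -1) y :=
    (hasDerivAt_Li2R h1y.ne' (by intro h; nlinarith)).comp (h := fun t : ℝ => 1 - t) y d5
  -- log pieces
  have hlog1 : HasDerivAt (fun t => Real.log (t * (1 - z) / (t - 1)))
      ((y * (1 - z) / (y - 1))⁻¹
        * ((1 * (1 - z) * (y - 1) - y * (1 - z) * 1) / (y - 1) ^ 2)) y :=
    (Real.hasDerivAt_log (div_ne_zero (mul_ne_zero hyne h1z.ne') hy1ne)).comp (h := fun t : ℝ => t * (1 - z) / (t - 1)) y d4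
  have hlog2 : HasDerivAt (fun t => Real.log (1 - t * z)) ((1 - y * z)⁻¹ * -z) y :=
    (Real.hasDerivAt_log h1yz.ne').comp (h := fun t : ℝ => 1 - t * z) y d1
  have hlog3 : HasDerivAt (fun t => Real.log (1 - t)) ((1 - y)⁻¹ * -1) y :=
    (Real.hasDerivAt_log h1y.ne').comp y d5
  have hlog4 : HasDerivAt (fun t => Real.log (t * z)) ((y * z)⁻¹ * (1 * z)) y :=
    (Real.hasDerivAt_log (mul_ne_zero hyne hzne)).comp (h := fun t : ℝ => t * z) y d6
  have hLHS := (((hA.sub hB).add hC).add (hlog1.mul hlog2)).add (hlog3.mul hlog4)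
  have hRHS := (hasDerivAt_Li11 hy0 hy1 hz0 hz1).sub hD
  erw [hLHS.deriv, hRHS.deriv]
  -- now a pure computation with logarithms
  rw [show 1 - (1 - y * z) = y * z by ring]
  rw [show 1 - (1 - y) = y by ring]
  rw [show 1 - y / (y - 1) = (1 - y)⁻¹ by field_simp; ring]
  rw [show 1 - (1 - y * z) / (z * (1 - y)) = -((1 - z) / (z * (1 - y))) by
    field_simp; ring]
  rw [show y * (1 - z) / (y - 1) = -(y * (1 - z) / (1 - y)) by field_simp; ring]
  rw [Real.log_neg_eq_log, Real.log_neg_eq_log, Real.log_inv,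
    Real.log_mul hyne hzne,
    Real.log_div h1z.ne' (mul_ne_zero hzne h1y.ne'),
    Real.log_mul hzne h1y.ne',
    Real.log_div (mul_ne_zero hyne h1z.ne') h1y.ne',
    Real.log_mul hyne h1z.ne']
  field_simp
  ring
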